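/- Every periodic solution of system (S1a) lies on a circle centered at the origin of radius 0, 1, or 2: if x, y : ℝ → ℝ is a solution of (S1a) and there exists T > 0 with x(t+T) = x(t) and y(t+T) = y(t) for all t, then the function x(t)² + y(t)² is constant, and its constant value is 0, 1, or 4. -/

import Mathlib

open Set

/-- Every periodic solution of system (S1a) lies on a circle centered at the
origin of radius `0`, `1`, or `2`. -/
theorem periodic_solutions_S1a (x y : ℝ → ℝ)
    (hx : ∀ t : ℝ, HasDerivAt x
      (-y t + x t * ((x t) ^ 2 + (y t) ^ 2 - 1) * ((x t) ^ 2 + (y t) ^ 2 - 4)) t)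
    (hy : ∀ t : ℝ, HasDerivAt y
      (x t + y t * ((x t) ^ 2 + (y t) ^ 2 - 1) * ((x t) ^ 2 + (y t) ^ 2 - 4)) t)
    (T : ℝ) (hT : 0 < T)
    (hper : ∀ t : ℝ, x (t + T) = x t ∧ y (t + T) = y t) :
    ∃ c : ℝ, (∀ t : ℝ, (x t) ^ 2 + (y t) ^ 2 = c) ∧ (c = 0 ∨ c = 1 ∨ c = 4) := by
  set r : ℝ → ℝ := fun t => (x t) ^ 2 + (y t) ^ 2 with hrdef
  set v : ℝ → ℝ → ℝ := fun _ u => 2 * u * (u - 1) * (u - 4) with hvdef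
  have hr : ∀ t, HasDerivAt r (v t (r t)) t := by
    intro t
    have := ((hx t).pow 2).add ((hy t).pow 2)
    refine this.congr_deriv ?_
    simp only [hrdef, hvdef]
    ring
  have hrper : Function.Periodic r T := by
    intro t
    simp only [hrdef, (hper t).1, (hper t).2]
  have hrc : Continuous r := by
    exact continuous_iff_continuousAt.2 fun t => (hr t).continuousAt
  -- maximum on [0, T]
  obtain ⟨t₀, ht₀mem, ht₀⟩ := isCompact_Icc.exists_isMaxOn (nonempty_Icc.2 hT.le)
    (hrc.continuousOn (s := Icc 0 T))
  set c := r t₀ with hcdef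
  have hmax : ∀ t, r t ≤ c := by
    intro t
    obtain ⟨s, hs, hse⟩ := hrper.exists_mem_Ico₀ hT t
    rw [hse]
    exact ht₀ (Ico_subset_Icc_self hs)
  have hnonneg : ∀ t, 0 ≤ r t := fun t => add_nonneg (sq_nonneg _) (sq_nonneg _)
  -- derivative vanishes at the global max
  have hglobal : IsMaxOn r univ t₀ := fun t _ => hmax t
  have hderiv0 : v t₀ c = 0 := by
    have := (hglobal.isLocalMax (Filter.univ_mem)).hasDerivAt_eq_zero (hr t₀)
    simpa [hcdef] using this
  have hcval : c = 0 ∨ c = 1 ∨ c = 4 := by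
    have h : 2 * c * (c - 1) * (c - 4) = 0 := hderiv0
    have := mul_eq_zero.1 h
    rcases this with h1 | h1
    · rcases mul_eq_zero.1 h1 with h2 | h2
      · rcases mul_eq_zero.1 h2 with h3 | h3
        · norm_num at h3
        · exact Or.inl h3
      · exact Or.inr (Or.inl (by linarith))
    · exact Or.inr (Or.inr (by linarith))
  have hc4 : c ≤ 4 := by rcases hcval with h | h | h <;> simp [h] <;> norm_num
  -- membership in Icc 0 4
  have hmem : ∀ t, r t ∈ Icc (0:ℝ) 4 := fun t => ⟨hnonneg t, (hmax t).trans hc4⟩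
  -- Lipschitz bound on Icc 0 4
  have hlip : ∀ t : ℝ, LipschitzOnWith 184 (v t) (Icc (0:ℝ) 4) := by
    intro t
    apply Convex.lipschitzOnWith_of_nnnorm_hasDerivWithin_le
      (f' := fun u => 6 * u ^ 2 - 20 * u + 8) (convex_Icc 0 4)
    · intro u hu
      have : HasDerivAt (v t) (6 * u ^ 2 - 20 * u + 8) u := by
        have := ((((hasDerivAt_id u).const_mul (2:ℝ)).mul
          ((hasDerivAt_id u).sub_const 1)).mul ((hasDerivAt_id u).sub_const 4))
        refine this.congr_deriv ?_
        simp only [id, Pi.mul_apply]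
        ring
      exact this.hasDerivWithinAt
    · intro u hu
      rw [← NNReal.coe_le_coe, coe_nnnorm, Real.norm_eq_abs]
      rcases hu with ⟨h0, h4⟩
      rw [abs_le]
      push_cast
      constructor <;> nlinarith [sq_nonneg u, sq_nonneg (u - 2)]
  -- uniqueness: r ≡ c forward in time from t₀
  have hfwd : ∀ b : ℝ, t₀ < b → r b = c := by
    intro b hb
    have := ODE_solution_unique_of_mem_Icc (s := fun _ => Icc (0:ℝ) 4)
      (v := v) (t₀ := t₀) (a := t₀ - 1) (b := b + 1) (fun t _ => hlip t)
      ⟨by linarith, by linarith⟩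
      (hrc.continuousOn) (fun t _ => hr t) (fun t _ => hmem t)
      (continuousOn_const (c := c)) ?_ ?_ rfl
    · exact this ⟨by linarith, by linarith⟩
    · intro t _
      have : v t c = 0 := by
        rcases hcval with h | h | h <;> simp [hvdef, h] <;> ring
      simpa [this] using (hasDerivAt_const t c)
    · intro t _
      exact ⟨by rcases hcval with h | h | h <;> simp [h], by rcases hcval with h | h | h <;> simp [h] <;> norm_num⟩
  refine ⟨c, fun t => ?_, hcval⟩
  -- shift t forward by multiples of T past t₀
  obtain ⟨n, hn⟩ := Archimedean.arch (t₀ - t + 1) hT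
  have hshift : ∀ m : ℕ, r (t + m • T) = r t := by
    intro m
    induction m with
    | zero => simp
    | succ k ih =>
        have : t + (k+1) • T = (t + k • T) + T := by
          simp [add_smul, one_smul]; ring
        rw [this, hrper, ih]
  have hlt : t₀ < t + n • T := by
    have : (n : ℝ) • T = n • T := by simp
    have h2 : t₀ - t + 1 ≤ n • T := by simpa using hn
    linarith
  show r t = c
  rw [← hshift n]
  exact hfwd _ hlt
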